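/- Let W ∈ ℝ^{n×n} be entrywise nonnegative, symmetric, and doubly stochastic (W𝟙 = 𝟙 and 𝟙ᵀW = 𝟙ᵀ), with δ = ‖W − J‖₂² < 1 where J = (1/n)𝟙𝟙ᵀ. Let t ≥ 1, let V_0,…,V_{t−1} ∈ ℝ^{d×n}, and set a_{k,i} := (1/n)𝟙 − Wᵏe_i. Then for every i ∈ {1,…,n}, ‖Σ_{j=0}^{t−1} V_j·a_{t−1−j,i}‖² ≤ Σ_{j=0}^{t−1} ‖V_j‖_F²·( δ^{t−1−j} + 2·(√δ)^{t−1−j}/(1 − √δ) ). -/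

import Mathlib

/-- The matrix `J = (1/n) 𝟙 𝟙ᵀ`, all of whose entries equal `1/n`. -/
noncomputable def Jmat (n : ℕ) : Matrix (Fin n) (Fin n) ℝ :=
  Matrix.of fun _ _ => (n : ℝ)⁻¹

/-- The spectral norm of a real matrix: the operator norm of the associated linear map
between Euclidean spaces. -/
noncomputable def specNorm {m n : ℕ} (A : Matrix (Fin m) (Fin n) ℝ) : ℝ :=
  ‖(Matrix.toEuclideanLin A).toContinuousLinearMap‖

/-- View a vector in `ℝ^d` as an element of Euclidean space (with the Euclidean norm). -/
def toE {d : ℕ} (v : Fin d → ℝ) : EuclideanSpace ℝ (Fin d) := WithLp.toLp 2 v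

/-- The squared Frobenius norm of a matrix: the sum of the squares of its entries. -/
def frobSq {d n : ℕ} (M : Matrix (Fin d) (Fin n) ℝ) : ℝ :=
  ∑ i, ∑ k, (M k i) ^ 2

/-- The vector `a_{k,i} = (1/n)𝟙 − Wᵏ e_i ∈ ℝⁿ`. -/
noncomputable def aVec {n : ℕ} (W : Matrix (Fin n) (Fin n) ℝ) (k : ℕ) (i : Fin n) :
    Fin n → ℝ :=
  (fun _ => (n : ℝ)⁻¹) - (W ^ k).mulVec (Pi.single i 1)

/- ------------- auxiliary lemmas ------------- -/

lemma normE_eq {d : ℕ} (v : Fin d → ℝ) : ‖toE v‖ = Real.sqrt (∑ k, (v k)^2) := by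
  rw [EuclideanSpace.norm_eq]
  simp [toE, Real.norm_eq_abs, sq_abs]

lemma mulVec_norm_le {m n : ℕ} (A : Matrix (Fin m) (Fin n) ℝ) (x : Fin n → ℝ) :
    ‖toE (A.mulVec x)‖ ≤ specNorm A * ‖toE x‖ :=
  by
  have h := (Matrix.toEuclideanLin A).toContinuousLinearMap.le_opNorm (toE x)
  exact h

lemma pow_mulVec_norm_le {n : ℕ} (M : Matrix (Fin n) (Fin n) ℝ) (k : ℕ) (x : Fin n → ℝ) :
    ‖toE ((M ^ k).mulVec x)‖ ≤ specNorm M ^ k * ‖toE x‖ := by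
  induction k with
  | zero => simp [Matrix.one_mulVec]
  | succ k ih =>
    rw [pow_succ', ← Matrix.mulVec_mulVec]
    calc ‖toE (M.mulVec ((M ^ k).mulVec x))‖
        ≤ specNorm M * ‖toE ((M ^ k).mulVec x)‖ := mulVec_norm_le _ _
      _ ≤ specNorm M * (specNorm M ^ k * ‖toE x‖) := by
          have h0 : (0:ℝ) ≤ specNorm M := norm_nonneg _
          exact mul_le_mul_of_nonneg_left ih h0
      _ = specNorm M ^ (k + 1) * ‖toE x‖ := by ring

lemma frob_nonneg {d n : ℕ} (M : Matrix (Fin d) (Fin n) ℝ) : 0 ≤ frobSq M :=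
  Finset.sum_nonneg fun _ _ => Finset.sum_nonneg fun _ _ => sq_nonneg _

lemma mulVec_frob_le {d n : ℕ} (M : Matrix (Fin d) (Fin n) ℝ) (a : Fin n → ℝ) :
    ‖toE (M.mulVec a)‖ ≤ Real.sqrt (frobSq M) * ‖toE a‖ := by
  rw [normE_eq, normE_eq, ← Real.sqrt_mul (frob_nonneg M)]
  apply Real.sqrt_le_sqrt
  calc ∑ k, (M.mulVec a k) ^ 2
      = ∑ k, (∑ l, M k l * a l) ^ 2 := rfl
    _ ≤ ∑ k, (∑ l, (M k l) ^ 2) * (∑ l, (a l) ^ 2) :=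
        Finset.sum_le_sum fun k _ => Finset.sum_mul_sq_le_sq_mul_sq _ _ _
    _ = frobSq M * ∑ l, (a l) ^ 2 := by
        rw [← Finset.sum_mul, frobSq, Finset.sum_comm]

section Wlemmas

variable {n : ℕ} (W : Matrix (Fin n) (Fin n) ℝ)

lemma W_mul_J (hrow : ∀ i, ∑ l, W i l = 1) : W * Jmat n = Jmat n := by
  ext a b
  simp only [Matrix.mul_apply, Jmat, Matrix.of_apply]
  rw [← Finset.sum_mul, hrow, one_mul]

lemma J_mul_W (hcol : ∀ j, ∑ l, W l j = 1) : Jmat n * W = Jmat n := by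
  ext a b
  simp only [Matrix.mul_apply, Jmat, Matrix.of_apply]
  rw [← Finset.mul_sum, hcol, mul_one]

lemma J_mul_J (hn : 1 ≤ n) : Jmat n * Jmat n = Jmat n := by
  have hn0 : (n:ℝ) ≠ 0 := by positivity
  ext a b
  simp only [Matrix.mul_apply, Jmat, Matrix.of_apply, Finset.sum_const, Finset.card_univ,
    Fintype.card_fin, nsmul_eq_mul]
  field_simp

lemma Wpow_mul_J (hrow : ∀ i, ∑ l, W i l = 1) (k : ℕ) : W ^ k * Jmat n = Jmat n := by
  induction k with
  | zero => simp
  | succ k ih => rw [pow_succ, mul_assoc, W_mul_J W hrow, ih]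

lemma WJ_pow (hn : 1 ≤ n) (hrow : ∀ i, ∑ l, W i l = 1) (hcol : ∀ j, ∑ l, W l j = 1)
    (k : ℕ) (hk : 1 ≤ k) : (W - Jmat n) ^ k = W ^ k - Jmat n := by
  induction k with
  | zero => omega
  | succ k ih =>
    rcases Nat.eq_zero_or_pos k with rfl | hk'
    · simp
    · rw [pow_succ, ih hk', Matrix.sub_mul, Matrix.mul_sub, Matrix.mul_sub,
        Wpow_mul_J W hrow, J_mul_W W hcol, J_mul_J hn, ← pow_succ]
      abel

lemma aVec_eq {n : ℕ} (W : Matrix (Fin n) (Fin n) ℝ) (k : ℕ) (i : Fin n) :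
    aVec W k i = (Jmat n - W ^ k).mulVec (Pi.single i 1) := by
  rw [Matrix.sub_mulVec]
  unfold aVec
  congr 1
  funext l
  simp [Jmat]

end Wlemmas

lemma norm_single_one {n : ℕ} (i : Fin n) : ‖toE (Pi.single i (1:ℝ))‖ = 1 := by
  rw [normE_eq]
  have : ∑ l, ((Pi.single i 1 : Fin n → ℝ) l) ^ 2 = 1 := by
    rw [Finset.sum_eq_single i]
    · simp
    · intro b _ hb; simp [Pi.single_apply, hb]
    · simp
  rw [this, Real.sqrt_one]

lemma aVec_norm_le {n : ℕ} (hn : 1 ≤ n) (W : Matrix (Fin n) (Fin n) ℝ)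
    (hrow : ∀ i, ∑ l, W i l = 1) (hcol : ∀ j, ∑ l, W l j = 1)
    (k : ℕ) (i : Fin n) :
    ‖toE (aVec W k i)‖ ≤ specNorm (W - Jmat n) ^ k := by
  have hn0 : (0:ℝ) < n := by positivity
  rcases Nat.eq_zero_or_pos k with rfl | hk
  · -- k = 0
    rw [pow_zero, normE_eq]
    have hval : ∑ l, (aVec W 0 i l) ^ 2 = 1 - (n:ℝ)⁻¹ := by
      have h1 : ∑ l, Pi.single i (1:ℝ) l = 1 := by simp
      have h2 : ∑ l, ((Pi.single i 1 : Fin n → ℝ) l) ^ 2 = 1 := by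
        rw [Finset.sum_eq_single i]
        · simp
        · intro b _ hb; simp [Pi.single_apply, hb]
        · simp
      have : ∀ l, aVec W 0 i l = (n:ℝ)⁻¹ - (Pi.single i 1 : Fin n → ℝ) l := by
        intro l; simp [aVec, Matrix.one_apply, Pi.single_apply]
      simp only [this, sub_sq]
      rw [Finset.sum_add_distrib, Finset.sum_sub_distrib, Finset.sum_const, h2,
        ← Finset.mul_sum, h1, Finset.card_univ, Fintype.card_fin, nsmul_eq_mul]
      have hne : (n:ℝ) ≠ 0 := ne_of_gt hn0
      field_simp
      ring
    rw [hval]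
    have hinv : 0 ≤ (n:ℝ)⁻¹ := by positivity
    calc Real.sqrt (1 - (n:ℝ)⁻¹) ≤ Real.sqrt 1 := Real.sqrt_le_sqrt (by linarith)
      _ = 1 := Real.sqrt_one
  · have hpow := WJ_pow W hn hrow hcol k hk
    have heq : Jmat n - W ^ k = -((W - Jmat n) ^ k) := by
      rw [hpow, neg_sub]
    rw [aVec_eq, heq, Matrix.neg_mulVec]
    have hneg : ‖toE (-(((W - Jmat n) ^ k).mulVec (Pi.single i 1)))‖
        = ‖toE (((W - Jmat n) ^ k).mulVec (Pi.single i 1))‖ := by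
      rw [toE, toE, WithLp.toLp_neg]
      exact norm_neg _
    rw [hneg]
    calc ‖toE (((W - Jmat n) ^ k).mulVec (Pi.single i 1))‖
        ≤ specNorm (W - Jmat n) ^ k * ‖toE (Pi.single i (1:ℝ))‖ :=
          pow_mulVec_norm_le _ _ _
      _ = specNorm (W - Jmat n) ^ k := by rw [norm_single_one, mul_one]

theorem stmt_16
    (n d : ℕ) (hn : 1 ≤ n) (hd : 1 ≤ d)
    (W : Matrix (Fin n) (Fin n) ℝ)
    (hWnn : ∀ i j, 0 ≤ W i j)
    (hWsymm : W.IsSymm)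
    (hW1 : W.mulVec (fun _ => 1) = fun _ => 1)
    (hW1' : Matrix.vecMul (fun _ => 1) W = fun _ => 1)
    (δ : ℝ) (hδdef : δ = (specNorm (W - Jmat n)) ^ 2) (hδ : δ < 1)
    (t : ℕ) (ht : 1 ≤ t)
    (V : ℕ → Matrix (Fin d) (Fin n) ℝ)
    (i : Fin n) :
    ‖toE (∑ j ∈ Finset.range t, (V j).mulVec (aVec W (t - 1 - j) i))‖ ^ 2
      ≤ ∑ j ∈ Finset.range t,
          frobSq (V j) *
            (δ ^ (t - 1 - j) + 2 * Real.sqrt δ ^ (t - 1 - j) / (1 - Real.sqrt δ)) := by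
  set s := specNorm (W - Jmat n) with hs
  have hs0 : (0:ℝ) ≤ s := norm_nonneg _
  have hδ0 : 0 ≤ δ := hδdef ▸ sq_nonneg s
  have hsq : Real.sqrt δ = s := by rw [hδdef, Real.sqrt_sq hs0]
  have hsq1 : s ^ 2 < 1 := by rw [← hδdef]; exact hδ
  have hs1 : s < 1 := by nlinarith
  have h1s : (0:ℝ) < 1 - s := by linarith
  have hrow : ∀ a, ∑ l, W a l = 1 := by
    intro a
    have := congrFun hW1 a
    simpa [Matrix.mulVec, dotProduct] using this
  have hcol : ∀ b, ∑ l, W l b = 1 := by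
    intro b
    have := congrFun hW1' b
    simpa [Matrix.vecMul, dotProduct] using this
  have ha : ∀ k, ‖toE (aVec W k i)‖ ≤ s ^ k :=
    fun k => aVec_norm_le hn W hrow hcol k i
  set b : ℕ → ℝ := fun j => Real.sqrt (frobSq (V j)) with hb
  set c : ℕ → ℝ := fun j => s ^ (t - 1 - j) with hc
  have hc0 : ∀ j, 0 ≤ c j := fun j => pow_nonneg hs0 _
  have hb0 : ∀ j, 0 ≤ b j := fun j => Real.sqrt_nonneg _
  -- Step 1: triangle inequality + Frobenius bound
  have step1 : ‖toE (∑ j ∈ Finset.range t, (V j).mulVec (aVec W (t - 1 - j) i))‖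
      ≤ ∑ j ∈ Finset.range t, b j * c j := by
    have heq : toE (∑ j ∈ Finset.range t, (V j).mulVec (aVec W (t - 1 - j) i))
        = ∑ j ∈ Finset.range t, toE ((V j).mulVec (aVec W (t - 1 - j) i)) := WithLp.toLp_sum _ _ _ _
    rw [heq]
    refine (norm_sum_le _ _).trans (Finset.sum_le_sum fun j _ => ?_)
    calc ‖toE ((V j).mulVec (aVec W (t - 1 - j) i))‖
        ≤ b j * ‖toE (aVec W (t - 1 - j) i)‖ := mulVec_frob_le _ _
      _ ≤ b j * c j := mul_le_mul_of_nonneg_left (ha _) (hb0 j)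
  -- Step 2: Cauchy–Schwarz
  have step2 : (∑ j ∈ Finset.range t, b j * c j) ^ 2
      ≤ (∑ j ∈ Finset.range t, b j ^ 2 * c j) * (∑ j ∈ Finset.range t, c j) := by
    have e1 : ∑ j ∈ Finset.range t, b j * c j
        = ∑ j ∈ Finset.range t, (b j * Real.sqrt (c j)) * Real.sqrt (c j) :=
      Finset.sum_congr rfl fun j _ => by rw [mul_assoc, Real.mul_self_sqrt (hc0 j)]
    have e2 : ∑ j ∈ Finset.range t, (b j * Real.sqrt (c j)) ^ 2
        = ∑ j ∈ Finset.range t, b j ^ 2 * c j :=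
      Finset.sum_congr rfl fun j _ => by rw [mul_pow, Real.sq_sqrt (hc0 j)]
    have e3 : ∑ j ∈ Finset.range t, (Real.sqrt (c j)) ^ 2
        = ∑ j ∈ Finset.range t, c j :=
      Finset.sum_congr rfl fun j _ => Real.sq_sqrt (hc0 j)
    have hcs := Finset.sum_mul_sq_le_sq_mul_sq (Finset.range t)
      (fun j => b j * Real.sqrt (c j)) (fun j => Real.sqrt (c j))
    rw [e1]
    calc (∑ j ∈ Finset.range t, (b j * Real.sqrt (c j)) * Real.sqrt (c j)) ^ 2
        ≤ (∑ j ∈ Finset.range t, (b j * Real.sqrt (c j)) ^ 2)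
            * (∑ j ∈ Finset.range t, (Real.sqrt (c j)) ^ 2) := hcs
      _ = (∑ j ∈ Finset.range t, b j ^ 2 * c j) * (∑ j ∈ Finset.range t, c j) := by
          rw [e2, e3]
  -- geometric series bound
  have geo : ∑ j ∈ Finset.range t, c j ≤ 1 / (1 - s) := by
    have hre : ∑ j ∈ Finset.range t, c j = ∑ j ∈ Finset.range t, s ^ j :=
      Finset.sum_range_reflect (fun j => s ^ j) t
    rw [hre, le_div_iff₀ h1s]
    have hgm : (∑ j ∈ Finset.range t, s ^ j) * (1 - s) = 1 - s ^ t := by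
      linear_combination -geom_sum_mul s t
    have hst : 0 ≤ s ^ t := pow_nonneg hs0 t
    linarith
  have hsum0 : 0 ≤ ∑ j ∈ Finset.range t, b j ^ 2 * c j :=
    Finset.sum_nonneg fun j _ => mul_nonneg (sq_nonneg _) (hc0 j)
  calc ‖toE (∑ j ∈ Finset.range t, (V j).mulVec (aVec W (t - 1 - j) i))‖ ^ 2
      ≤ (∑ j ∈ Finset.range t, b j * c j) ^ 2 :=
        pow_le_pow_left₀ (norm_nonneg _) step1 2
    _ ≤ (∑ j ∈ Finset.range t, b j ^ 2 * c j) * (∑ j ∈ Finset.range t, c j) := step2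
    _ ≤ (∑ j ∈ Finset.range t, b j ^ 2 * c j) * (1 / (1 - s)) :=
        mul_le_mul_of_nonneg_left geo hsum0
    _ ≤ ∑ j ∈ Finset.range t,
          frobSq (V j) * (δ ^ (t - 1 - j) + 2 * Real.sqrt δ ^ (t - 1 - j) / (1 - Real.sqrt δ)) := by
        rw [Finset.sum_mul]
        apply Finset.sum_le_sum
        intro j _
        have hbj : b j ^ 2 = frobSq (V j) := Real.sq_sqrt (frob_nonneg _)
        rw [hbj, hsq, mul_assoc]
        have key : c j * (1 / (1 - s)) ≤ δ ^ (t - 1 - j) + 2 * s ^ (t - 1 - j) / (1 - s) := by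
          have hδk : 0 ≤ δ ^ (t - 1 - j) := pow_nonneg hδ0 _
          have hcj : (0:ℝ) ≤ s ^ (t - 1 - j) := pow_nonneg hs0 _
          have h2 : s ^ (t - 1 - j) / (1 - s) ≤ 2 * s ^ (t - 1 - j) / (1 - s) :=
            (div_le_div_iff_of_pos_right h1s).mpr (by linarith)
          have h1 : c j * (1 / (1 - s)) = s ^ (t - 1 - j) / (1 - s) := by
            simp only [hc]
            ring
          rw [h1]
          linarith
        exact mul_le_mul_of_nonneg_left key (frob_nonneg _)
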